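/- Let M be a loopless matroid and σ ∈ B(M) a k-dimensional cone corresponding to a chain of flats F = {∅ ⊊ F_1 ⊊ ⋯ ⊊ F_k ⊊ E}. Then the star fan star_σ(B(M)) equals (after translation to the origin) the Bergman fan of the matroid ⊕_{i=0}^{k} M|F_{i+1}/F_i, in the sense that the lattice of flats of ⊕ M|F_{i+1}/F_i corresponds to the chains of flats of M refining F. -/

import Mathlib

open scoped BigOperators
open Polynomial

/-- The rank of a set `S` in a matroid `M`: the largest cardinality of an independent
subset of `S`. -/
noncomputable def mrank {α : Type*} (M : Matroid α) (S : Set α) : ℕ :=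
  sSup {n | ∃ I, I ⊆ S ∧ M.Indep I ∧ I.ncard = n}

/-- A matroid is loopless if every singleton of the ground set is independent. -/
def MLoopless {α : Type*} (M : Matroid α) : Prop := ∀ a ∈ M.E, M.Indep {a}

/-- The characteristic polynomial of a matroid:
`χ_M(λ) = Σ_{S ⊆ E} (-1)^{|S|} λ^{r(E) - r(S)}`. -/
noncomputable def charPoly {α : Type*} (M : Matroid α) [Fintype α] : Polynomial ℤ :=
  ∑ S ∈ ((Set.toFinite M.E).toFinset).powerset,
    C ((-1 : ℤ) ^ S.card) * X ^ (mrank M M.E - mrank M ↑S)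

/-- The rank function of the minor `(M|F')/F`: for `S ⊆ F' \ F` it is
`r(S ∪ F) - r(F)`. -/
noncomputable def minorRank {α : Type*} (M : Matroid α) (F F' S : Set α) : ℕ :=
  mrank M ((S ∩ (F' \ F)) ∪ F) - mrank M F

/-- Independence in the minor `(M|F')/F`. -/
noncomputable def MinorIndep {α : Type*} (M : Matroid α) (F F' I : Set α) : Prop :=
  I ⊆ F' \ F ∧ mrank M (I ∪ F) = I.ncard + mrank M F

/-- The beta invariant of the minor `(M|F')/F`:
`β = (-1)^rank Σ_{S ⊆ F'\F} (-1)^{|S|} r(S)`. -/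
noncomputable def minorBeta {α : Type*} (M : Matroid α) [Fintype α] (F F' : Set α) : ℤ :=
  (-1 : ℤ) ^ (minorRank M F F' Set.univ) *
    ∑ S ∈ ((Set.toFinite (F' \ F)).toFinset).powerset,
      (-1 : ℤ) ^ S.card * (minorRank M F F' ↑S : ℤ)

section Aux

variable {α : Type*} {M : Matroid α} {I J K X F F' B : Set α}

/-- The closure of any set is a flat. -/
lemma closure_flat' (M : Matroid α) (X : Set α) : M.IsFlat (M.closure X) := by
  rw [Matroid.closure_def]
  haveI hne : Nonempty ↑{F | M.IsFlat F ∧ X ∩ M.E ⊆ F} :=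
    ⟨⟨M.E, ⟨M.ground_isFlat, Set.inter_subset_right⟩⟩⟩
  rw [Set.sInter_eq_iInter]
  exact Matroid.IsFlat.iInter fun F => F.2.1

lemma basis_ncard_eq (hI : M.IsBasis I X) (hJ : M.IsBasis J X) : I.ncard = J.ncard :=
  hI.restrict_isBase.ncard_eq_ncard_of_isBase hJ.restrict_isBase

lemma indep_ncard_le (hJ : M.Indep J) (hJX : J ⊆ X) (hI : M.IsBasis I X) [Fintype α] :
    J.ncard ≤ I.ncard := by
  obtain ⟨J', hJ', hsub⟩ := hJ.subset_isBasis_of_subset hJX hI.subset_ground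
  calc J.ncard ≤ J'.ncard := Set.ncard_le_ncard hsub (Set.toFinite _)
    _ = I.ncard := basis_ncard_eq hJ' hI

lemma mrank_eq_ncard_of_basis [Fintype α] (hI : M.IsBasis I X) : mrank M X = I.ncard := by
  refine le_antisymm (csSup_le ⟨I.ncard, I, hI.subset, hI.indep, rfl⟩ ?_)
    (le_csSup ⟨I.ncard, ?_⟩ ⟨I, hI.subset, hI.indep, rfl⟩) <;>
  · rintro n ⟨J, hJX, hJi, rfl⟩
    exact indep_ncard_le hJi hJX hI

/-- Characterization of `MinorIndep` via a fixed basis of `F`. -/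
lemma minorIndep_iff [Fintype α] (hE : M.E = Set.univ) (hB : M.IsBasis B F)
    (hJ : J ⊆ F' \ F) : MinorIndep M F F' J ↔ M.Indep (J ∪ B) := by
  have hground : ∀ S : Set α, S ⊆ M.E := fun S => by rw [hE]; exact Set.subset_univ _
  have hJF : Disjoint J F := Set.disjoint_left.2 fun x hx => (hJ hx).2
  have hJB : Disjoint J B := hJF.mono_right hB.subset
  constructor
  · rintro ⟨-, hr⟩
    obtain ⟨K, hK, hBK⟩ := hB.indep.subset_isBasis_of_subset
      (hB.subset.trans Set.subset_union_right) (hground _)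
    have hKcard : K.ncard = J.ncard + B.ncard := by
      rw [← mrank_eq_ncard_of_basis hK, hr, mrank_eq_ncard_of_basis hB]
    have hKFle : (K ∩ F).ncard ≤ B.ncard := by
      rw [← mrank_eq_ncard_of_basis hB]
      refine le_csSup ⟨B.ncard, ?_⟩
        ⟨K ∩ F, Set.inter_subset_right, hK.indep.subset Set.inter_subset_left, rfl⟩
      rintro n ⟨J', hJ'X, hJ'i, rfl⟩
      exact indep_ncard_le hJ'i hJ'X hB
    have hKF : B = K ∩ F :=
      Set.eq_of_subset_of_ncard_le (Set.subset_inter hBK hB.subset) hKFle (Set.toFinite _)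
    have hKd : K \ F ⊆ J := fun x hx => (hK.subset hx.1).resolve_right hx.2
    have hcard2 : K.ncard = (K ∩ F).ncard + (K \ F).ncard := by
      nth_rewrite 1 [← Set.inter_union_diff K F]
      exact Set.ncard_union_eq
        (Set.disjoint_sdiff_right.mono_left Set.inter_subset_right)
        (Set.toFinite _) (Set.toFinite _)
    have hJK : K \ F = J := by
      refine Set.eq_of_subset_of_ncard_le hKd ?_ (Set.toFinite _)
      have : (K \ F).ncard = J.ncard := by
        rw [hcard2, ← hKF] at hKcard; omega
      omega
    have : J ∪ B = K := by rw [← hJK, hKF, Set.diff_union_inter]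
    rw [this]; exact hK.indep
  · intro h
    refine ⟨hJ, ?_⟩
    have hbasis : M.IsBasis (J ∪ B) (J ∪ F) := by
      refine h.isBasis_of_subset_of_subset_closure
        (Set.union_subset_union_right J hB.subset) (Set.union_subset ?_ ?_)
      · exact Set.subset_union_left.trans (M.subset_closure _ (hground _))
      · exact hB.subset_closure.trans (M.closure_subset_closure Set.subset_union_right)
    rw [mrank_eq_ncard_of_basis hbasis, mrank_eq_ncard_of_basis hB,
      Set.ncard_union_eq hJB (Set.toFinite _) (Set.toFinite _)]

end Aux

/-- let `M` be a loopless matroid and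
`𝓕 = {∅ = F₀ ⊊ F₁ ⊊ ⋯ ⊊ F_k ⊊ F_{k+1} = E}` a chain of flats corresponding to a
`k`-dimensional cone `σ` of `B(M)`.  Then the star fan `star_σ(B(M))` is the Bergman fan
of the direct sum `N = ⊕_{i=0}^k M|F_{i+1}/F_i` in the sense that the lattice of flats of
`N` corresponds to the chains of flats of `M` refining `𝓕`: a set `H` is a flat of `N`
iff for every `i` there is a flat `G` of `M` with `F_i ⊆ G ⊆ F_{i+1}` such that
`H ∩ (F_{i+1} \ F_i) = G \ F_i`. -/
theorem star_fan_flats_of_direct_sum {α : Type*} [Fintype α] {k : ℕ}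
    (M : Matroid α) (hE : M.E = Set.univ) (hl : MLoopless M)
    (F : Fin (k + 2) → Set α) (hmono : StrictMono F)
    (h0 : F 0 = ∅) (htop : F (Fin.last (k + 1)) = Set.univ)
    (hflat : ∀ i, M.IsFlat (F i))
    (N : Matroid α) (hNE : N.E = Set.univ)
    (hNI : ∀ I, N.Indep I ↔ I ⊆ Set.univ ∧ ∀ i : Fin (k + 1),
      MinorIndep M (F i.castSucc) (F i.succ) (I ∩ (F i.succ \ F i.castSucc))) :
    ∀ H : Set α, N.IsFlat H ↔
      ∀ i : Fin (k + 1), ∃ G : Set α, M.IsFlat G ∧ F i.castSucc ⊆ G ∧ G ⊆ F i.succ ∧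
        H ∩ (F i.succ \ F i.castSucc) = G \ F i.castSucc := by
  have hground : ∀ S : Set α, S ⊆ M.E := fun S => by rw [hE]; exact Set.subset_univ _
  set E : Fin (k + 1) → Set α := fun i => F i.succ \ F i.castSucc with hEdef
  -- choose bases of the flats F i.castSucc
  have hBex : ∀ i : Fin (k + 1), ∃ B, M.IsBasis B (F i.castSucc) :=
    fun i => M.exists_isBasis _ (hground _)
  choose B hB using hBex
  -- disjointness of the blocks
  have hEdisj : ∀ {i j : Fin (k + 1)}, i ≠ j → ∀ {x : α}, x ∈ E i → x ∉ E j := by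
    intro i j hij x hxi hxj
    rcases lt_or_gt_of_ne hij with h | h
    · have : F i.succ ⊆ F j.castSucc := hmono.monotone (by
        rw [Fin.le_def]; simp only [Fin.val_succ, Fin.coe_castSucc]
        exact Nat.succ_le_of_lt h)
      exact hxj.2 (this hxi.1)
    · have : F j.succ ⊆ F i.castSucc := hmono.monotone (by
        rw [Fin.le_def]; simp only [Fin.val_succ, Fin.coe_castSucc]
        exact Nat.succ_le_of_lt h)
      exact hxi.2 (this hxj.1)
  -- every element lies in some block
  classical
  have hEmem : ∀ x : α, ∃ i : Fin (k + 1), x ∈ E i := by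
    intro x
    have hSne : (Finset.univ.filter (fun j : Fin (k + 2) => x ∈ F j)).Nonempty :=
      ⟨Fin.last (k + 1), by simp [htop]⟩
    set m := (Finset.univ.filter (fun j : Fin (k + 2) => x ∈ F j)).min' hSne with hm
    have hmmem : x ∈ F m := by
      have := (Finset.univ.filter (fun j : Fin (k + 2) => x ∈ F j)).min'_mem hSne
      simpa using this
    have hm0 : m ≠ 0 := by
      intro h; rw [h, h0] at hmmem; exact hmmem
    obtain ⟨i, hi⟩ : ∃ i : Fin (k + 1), m = i.succ := by
      refine ⟨⟨m.val - 1, ?_⟩, ?_⟩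
      · have := m.isLt; omega
      · have hv : (m : ℕ) ≠ 0 := fun h => hm0 (Fin.ext h)
        apply Fin.ext; simp [Fin.val_succ]; omega
    refine ⟨i, by rw [← hi]; exact hmmem, fun hx => ?_⟩
    have hlt : (i.castSucc : Fin (k + 2)) < m := by
      rw [hi]; exact Fin.castSucc_lt_succ (i := i)
    have : m ≤ i.castSucc := Finset.min'_le _ _ (by simpa using hx)
    exact absurd this (not_le.2 hlt)
  -- independence in N in terms of M
  have hNIndep : ∀ I : Set α, N.Indep I ↔ ∀ i, M.Indep ((I ∩ E i) ∪ B i) := by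
    intro I
    rw [hNI]
    simp only [Set.subset_univ, true_and]
    exact forall_congr' fun i =>
      minorIndep_iff hE (hB i) Set.inter_subset_right
  -- the key closure identity for an N-basis J of H
  have hclos : ∀ {H J : Set α}, N.IsBasis J H →
      ∀ i, M.closure ((J ∩ E i) ∪ B i) = M.closure ((H ∩ E i) ∪ F i.castSucc) := by
    intro H J hJ i
    have hJindep := (hNIndep J).1 hJ.indep
    refine le_antisymm (M.closure_subset_closure
      (Set.union_subset_union (Set.inter_subset_inter_left _ hJ.subset) (hB i).subset)) ?_
    refine Matroid.closure_subset_closure_of_subset_closure (Set.union_subset ?_ ?_)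
    swap
    · exact (hB i).subset_closure.trans
        (M.closure_subset_closure Set.subset_union_right)
    intro x hx
    by_contra hxc
    have hxK : x ∉ (J ∩ E i) ∪ B i := fun hmem =>
      hxc (M.subset_closure _ (hground _) hmem)
    have hins : M.Indep (insert x ((J ∩ E i) ∪ B i)) :=
      ((hJindep i).insert_indep_iff_of_notMem hxK).2 ⟨by rw [hE]; trivial, hxc⟩
    have hxJ : N.Indep (insert x J) := by
      rw [hNIndep]
      intro j
      by_cases hji : j = i
      · subst hji
        rw [Set.insert_inter_of_mem hx.2, Set.insert_union]
        exact hins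
      · rw [Set.insert_inter_of_notMem (hEdisj ((fun h => hji h.symm)) hx.2)]
        exact hJindep j
    have : x ∈ J := hJ.mem_of_insert_indep hx.1 hxJ
    exact hxK (Or.inl ⟨this, hx.2⟩)
  intro H
  constructor
  · -- flat of N → chain of flats of M
    intro hH i
    obtain ⟨J, hJ⟩ := N.exists_isBasis H hH.subset_ground
    refine ⟨M.closure ((H ∩ E i) ∪ F i.castSucc), closure_flat' M _,
      Set.subset_union_right.trans (M.subset_closure _ (hground _)), ?_, ?_⟩
    · have h1 : (H ∩ E i) ∪ F i.castSucc ⊆ F i.succ :=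
        Set.union_subset (Set.inter_subset_right.trans Set.diff_subset)
          (hmono.monotone (Fin.castSucc_le_succ i))
      calc M.closure ((H ∩ E i) ∪ F i.castSucc) ⊆ M.closure (F i.succ) :=
            M.closure_subset_closure h1
        _ = F i.succ := (hflat i.succ).closure
    · apply Set.Subset.antisymm
      · intro x hx
        exact ⟨M.subset_closure _ (hground _) (Or.inl hx), hx.2.2⟩
      · intro x hx
        have hxE : x ∈ E i := by
          refine ⟨?_, hx.2⟩
          have h1 : (H ∩ E i) ∪ F i.castSucc ⊆ F i.succ :=
            Set.union_subset (Set.inter_subset_right.trans Set.diff_subset)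
              (hmono.monotone (Fin.castSucc_le_succ i))
          have := M.closure_subset_closure h1 hx.1
          rwa [(hflat i.succ).closure] at this
        by_contra hxH'
        have hxH : x ∉ H := fun h => hxH' ⟨h, hxE⟩
        have hxJ : x ∉ J := fun h => hxH (hJ.subset h)
        have hJindep := (hNIndep J).1 hJ.indep
        have hxK : x ∉ (J ∩ E i) ∪ B i := by
          rintro (⟨h, -⟩ | h)
          · exact hxJ h
          · exact hxE.2 ((hB i).subset h)
        have hxcl : x ∈ M.closure ((J ∩ E i) ∪ B i) := by
          rw [hclos hJ i]; exact hx.1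
        have hnotins : ¬ M.Indep (insert x ((J ∩ E i) ∪ B i)) := by
          intro h
          exact (((hJindep i).insert_indep_iff_of_notMem hxK).1 h).2 hxcl
        have hNdep : ¬ N.Indep (insert x J) := by
          rw [hNIndep]
          push_neg
          refine ⟨i, ?_⟩
          rwa [Set.insert_inter_of_mem hxE, Set.insert_union]
        have : x ∈ N.closure J :=
          (hJ.indep.mem_closure_iff_of_notMem hxJ).2
            ⟨hNdep, by rw [hNE]; exact Set.subset_univ _⟩
        rw [hJ.closure_eq_closure, hH.closure] at this
        exact hxH this
  · -- chain of flats of M → flat of N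
    intro hG
    have hHE : H ⊆ N.E := by rw [hNE]; exact Set.subset_univ _
    suffices h : N.closure H = H by rw [← h]; exact closure_flat' N H
    refine le_antisymm ?_ (N.subset_closure H hHE)
    intro x hx
    obtain ⟨J, hJ⟩ := N.exists_isBasis H hHE
    by_cases hxJ : x ∈ J
    · exact hJ.subset hxJ
    have hxcl : x ∈ N.closure J := by rwa [hJ.closure_eq_closure]
    have hNdep : ¬ N.Indep (insert x J) :=
      ((hJ.indep.mem_closure_iff_of_notMem hxJ).1 hxcl).1
    obtain ⟨i, hxE⟩ := hEmem x
    have hJindep := (hNIndep J).1 hJ.indep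
    have hfail : ¬ M.Indep ((insert x J ∩ E i) ∪ B i) := by
      intro h
      apply hNdep
      rw [hNIndep]
      intro j
      by_cases hji : j = i
      · subst hji; exact h
      · rw [Set.insert_inter_of_notMem (hEdisj ((fun h' => hji h'.symm)) hxE)]
        exact hJindep j
    rw [Set.insert_inter_of_mem hxE, Set.insert_union] at hfail
    have hxK : x ∉ (J ∩ E i) ∪ B i := by
      rintro (⟨h, -⟩ | h)
      · exact hxJ h
      · exact hxE.2 ((hB i).subset h)
    have hxMcl : x ∈ M.closure ((J ∩ E i) ∪ B i) := by
      by_contra hc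
      exact hfail (((hJindep i).insert_indep_iff_of_notMem hxK).2 ⟨by rw [hE]; trivial, hc⟩)
    rw [hclos hJ i] at hxMcl
    obtain ⟨G, hGflat, hFG, hGF, hHG⟩ := hG i
    have hsub : (H ∩ E i) ∪ F i.castSucc ⊆ G := by
      refine Set.union_subset ?_ hFG
      rw [hEdef]
      intro y hy
      have : y ∈ G \ F i.castSucc := hHG ▸ hy
      exact this.1
    have hxG : x ∈ G := by
      have := M.closure_subset_closure hsub hxMcl
      rwa [hGflat.closure] at this
    have : x ∈ H ∩ E i := by
      rw [hHG]
      exact ⟨hxG, hxE.2⟩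
    exact this.1
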